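/- In the canonical representation, the FRT relations hold for the Alexander-Conway R-matrix: R₂₁ L⁺₁ L⁺₂ = L⁺₂ L⁺₁ R₂₁, R₂₁ L⁻₁ L⁻₂ = L⁻₂ L⁻₁ R₂₁, and R₂₁ L⁺₁ L⁻₂ = L⁻₂ L⁺₁ R₂₁, where L⁺ and L⁻ are the 2×2 matrices over M₂(ℂ) given by L⁺ = [[ρ(K₁), 0],[(q−q⁻¹)ρ(X⁺), ρ(K₂)⁻¹]] and L⁻ = [[ρ(K₁)⁻¹, −(q−q⁻¹)ρ(X⁻)],[0, ρ(K₂)]]. -/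
import Mathlib


open Matrix

noncomputable section

def ρXp : Matrix (Fin 2) (Fin 2) ℂ := !![0, 1; 0, 0]
def ρXm : Matrix (Fin 2) (Fin 2) ℂ := !![0, 0; 1, 0]
def ρK₁ (q : ℂ) : Matrix (Fin 2) (Fin 2) ℂ := !![q, 0; 0, 1]
def ρK₂ (q : ℂ) : Matrix (Fin 2) (Fin 2) ℂ := !![1, 0; 0, -q]

/-- `L⁺` as a 2×2 matrix with entries in `M₂(ℂ)`. -/
def Lp (q : ℂ) : Matrix (Fin 2) (Fin 2) (Matrix (Fin 2) (Fin 2) ℂ) :=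
  !![ρK₁ q,            0;
     (q - q⁻¹) • ρXp,  (ρK₂ q)⁻¹]

/-- `L⁻` as a 2×2 matrix with entries in `M₂(ℂ)`. -/
def Lm (q : ℂ) : Matrix (Fin 2) (Fin 2) (Matrix (Fin 2) (Fin 2) ℂ) :=
  !![(ρK₁ q)⁻¹,  (-(q - q⁻¹)) • ρXm;
     0,          ρK₂ q]

/-- `L±₁ = Σ_{i,k} E_{ik} ⊗ I₂ ⊗ (L±)_{ik}` acting in `ℂ² ⊗ ℂ² ⊗ ℂ²`. -/
def L1 (L : Matrix (Fin 2) (Fin 2) (Matrix (Fin 2) (Fin 2) ℂ)) :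
    Matrix (Fin 2 × Fin 2 × Fin 2) (Fin 2 × Fin 2 × Fin 2) ℂ :=
  Matrix.of fun x y => (if x.2.1 = y.2.1 then 1 else 0) * L x.1 y.1 x.2.2 y.2.2

/-- `L±₂ = Σ_{i,k} I₂ ⊗ E_{ik} ⊗ (L±)_{ik}`. -/
def L2 (L : Matrix (Fin 2) (Fin 2) (Matrix (Fin 2) (Fin 2) ℂ)) :
    Matrix (Fin 2 × Fin 2 × Fin 2) (Fin 2 × Fin 2 × Fin 2) ℂ :=
  Matrix.of fun x y => (if x.1 = y.1 then 1 else 0) * L x.2.1 y.2.1 x.2.2 y.2.2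

/-- The Alexander–Conway matrix, index pairs ordered `(1,1),(1,2),(2,1),(2,2)`. -/
def RAC (q : ℂ) : Matrix (Fin 2 × Fin 2) (Fin 2 × Fin 2) ℂ :=
  Matrix.of fun p p' =>
    if p = (0, 0) ∧ p' = (0, 0) then q
    else if p = (0, 1) ∧ p' = (0, 1) then 1
    else if p = (0, 1) ∧ p' = (1, 0) then q - q⁻¹
    else if p = (1, 0) ∧ p' = (1, 0) then 1
    else if p = (1, 1) ∧ p' = (1, 1) then -q⁻¹
    else 0

/-- `R₂₁ ⊗ I₂` where `R₂₁ = P R P` acts on the two auxiliary legs. -/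
def R21 (q : ℂ) : Matrix (Fin 2 × Fin 2 × Fin 2) (Fin 2 × Fin 2 × Fin 2) ℂ :=
  Matrix.of fun x y =>
    RAC q (x.2.1, x.1) (y.2.1, y.1) * (if x.2.2 = y.2.2 then 1 else 0)


lemma mul12 (A B : Matrix (Fin 2) (Fin 2) (Matrix (Fin 2) (Fin 2) ℂ))
    (i j k l m n : Fin 2) :
    (L1 A * L2 B) (i,j,k) (l,m,n) = ∑ c, A i l k c * B j m c n := by
  simp only [L1, L2, Matrix.mul_apply, Fintype.sum_prod_type, Matrix.of_apply]
  rw [Fin.sum_univ_two]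
  fin_cases j <;> fin_cases l <;>
    simp [Fin.sum_univ_two]

lemma mul21 (B A : Matrix (Fin 2) (Fin 2) (Matrix (Fin 2) (Fin 2) ℂ))
    (i j k l m n : Fin 2) :
    (L2 B * L1 A) (i,j,k) (l,m,n) = ∑ c, B j m k c * A i l c n := by
  simp only [L1, L2, Matrix.mul_apply, Fintype.sum_prod_type, Matrix.of_apply]
  rw [Fin.sum_univ_two]
  fin_cases i <;> fin_cases m <;>
    simp [Fin.sum_univ_two, mul_comm, mul_assoc] <;> ring

lemma Rmul (q : ℂ) (M : Matrix (Fin 2 × Fin 2 × Fin 2) (Fin 2 × Fin 2 × Fin 2) ℂ)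
    (i j k : Fin 2) (y : Fin 2 × Fin 2 × Fin 2) :
    (R21 q * M) (i,j,k) y = ∑ a, ∑ b, RAC q (j, i) (b, a) * M (a, b, k) y := by
  simp only [R21, Matrix.mul_apply, Fintype.sum_prod_type, Matrix.of_apply]
  rw [Fin.sum_univ_two]
  fin_cases k <;> simp [Fin.sum_univ_two, mul_assoc]

lemma mulR (q : ℂ) (M : Matrix (Fin 2 × Fin 2 × Fin 2) (Fin 2 × Fin 2 × Fin 2) ℂ)
    (x : Fin 2 × Fin 2 × Fin 2) (l m n : Fin 2) :
    (M * R21 q) x (l,m,n) = ∑ a, ∑ b, M x (a, b, n) * RAC q (b, a) (m, l) := by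
  simp only [R21, Matrix.mul_apply, Fintype.sum_prod_type, Matrix.of_apply]
  rw [Fin.sum_univ_two]
  fin_cases n <;> simp [Fin.sum_univ_two, mul_comm, mul_assoc]

lemma K1inv (q : ℂ) (hq : q ≠ 0) :
    (!![q, 0; 0, 1] : Matrix (Fin 2) (Fin 2) ℂ)⁻¹ = !![q⁻¹, 0; 0, 1] := by
  apply inv_eq_right_inv
  ext i j
  fin_cases i <;> fin_cases j <;>
    simp [Matrix.mul_apply, Fin.sum_univ_two, mul_inv_cancel₀ hq]

lemma K2inv (q : ℂ) (hq : q ≠ 0) :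
    (!![1, 0; 0, -q] : Matrix (Fin 2) (Fin 2) ℂ)⁻¹ = !![1, 0; 0, -q⁻¹] := by
  apply inv_eq_right_inv
  ext i j
  fin_cases i <;> fin_cases j <;>
    simp [Matrix.mul_apply, Fin.sum_univ_two, mul_inv_cancel₀ hq]

set_option maxHeartbeats 1600000 in
lemma FRT_pp (q : ℂ) (hq : q ≠ 0) :
    R21 q * (L1 (Lp q) * L2 (Lp q)) = L2 (Lp q) * L1 (Lp q) * R21 q := by
  ext ⟨i, j, k⟩ ⟨l, m, n⟩
  rw [Rmul, mulR]
  simp only [mul12, mul21]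
  fin_cases i <;> fin_cases j <;> fin_cases k <;> fin_cases l <;> fin_cases m <;> fin_cases n <;>
  · simp [RAC, Lp, ρK₁, ρK₂, ρXp, K2inv q hq, Fin.sum_univ_two, Prod.ext_iff]
    try field_simp
    try ring

set_option maxHeartbeats 1600000 in
lemma FRT_mm (q : ℂ) (hq : q ≠ 0) :
    R21 q * (L1 (Lm q) * L2 (Lm q)) = L2 (Lm q) * L1 (Lm q) * R21 q := by
  ext ⟨i, j, k⟩ ⟨l, m, n⟩
  rw [Rmul, mulR]
  simp only [mul12, mul21]
  fin_cases i <;> fin_cases j <;> fin_cases k <;> fin_cases l <;> fin_cases m <;> fin_cases n <;>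
  · simp [RAC, Lm, ρK₁, ρK₂, ρXm, K1inv q hq, Fin.sum_univ_two, Prod.ext_iff]
    try field_simp
    try ring

set_option maxHeartbeats 1600000 in
lemma FRT_pm (q : ℂ) (hq : q ≠ 0) :
    R21 q * (L1 (Lp q) * L2 (Lm q)) = L2 (Lm q) * L1 (Lp q) * R21 q := by
  ext ⟨i, j, k⟩ ⟨l, m, n⟩
  rw [Rmul, mulR]
  simp only [mul12, mul21]
  fin_cases i <;> fin_cases j <;> fin_cases k <;> fin_cases l <;> fin_cases m <;> fin_cases n <;>
  · simp [RAC, Lp, Lm, ρK₁, ρK₂, ρXp, ρXm, K1inv q hq, K2inv q hq,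
      Fin.sum_univ_two, Prod.ext_iff]
    try field_simp
    try ring

/-- The FRT relations hold for the Alexander–Conway R-matrix in the canonical
representation: `R₂₁L⁺₁L⁺₂ = L⁺₂L⁺₁R₂₁`, `R₂₁L⁻₁L⁻₂ = L⁻₂L⁻₁R₂₁` and
`R₂₁L⁺₁L⁻₂ = L⁻₂L⁺₁R₂₁`. -/
theorem FRT_relations (q : ℂ) (hq : q ≠ 0) (hq2 : q ^ 2 ≠ 1) :
    R21 q * (L1 (Lp q) * L2 (Lp q)) = L2 (Lp q) * L1 (Lp q) * R21 q ∧
    R21 q * (L1 (Lm q) * L2 (Lm q)) = L2 (Lm q) * L1 (Lm q) * R21 q ∧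
    R21 q * (L1 (Lp q) * L2 (Lm q)) = L2 (Lm q) * L1 (Lp q) * R21 q := by
  exact ⟨FRT_pp q hq, FRT_mm q hq, FRT_pm q hq⟩
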